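/- arXiv:1501.00079 — 2 statements merged into one kernel-verified Lean document; each statement's English description precedes it below -/
import Mathlib

section
/- Let G be a connected simple graph with n > 3 vertices and m edges. If the diameter of G is at least 3, then mc(G) = m − n + 2. -/
open SimpleGraph Filter Real

/-- An edge-coloring `c` (colors on vertex pairs, only the values on edges matter)
of `G` is a monochromatic connection coloring (MC-coloring) if every two vertices
are joined by a path all of whose edges receive the same color. -/
def IsMCColoring {V : Type*} (G : SimpleGraph V) (c : Sym2 V → ℕ) : Prop :=
  ∀ u v : V, ∃ p : G.Walk u v, p.IsPath ∧ ∃ k : ℕ, ∀ e ∈ p.edges, c e = k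

/-- `mcNum G` is the maximum number of colors (counted on the edges of `G`)
used in an MC-coloring of `G`; it is `0` if `G` admits no MC-coloring
(in particular if `G` is disconnected). -/
noncomputable def mcNum {V : Type*} (G : SimpleGraph V) : ℕ :=
  sSup {k | ∃ c : Sym2 V → ℕ, IsMCColoring G c ∧ (Set.image c G.edgeSet).ncard = k}

section MCAux

variable {V : Type*}

/-- The subgraph of edges of color `k`. -/
@[reducible]
def colorGraph (G : SimpleGraph V) (c : Sym2 V → ℕ) (k : ℕ) : SimpleGraph V where
  Adj a b := G.Adj a b ∧ c s(a, b) = k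
  symm := by
    refine ⟨fun a b h => ?_⟩
    refine ⟨h.1.symm, ?_⟩
    rw [Sym2.eq_swap]
    exact h.2
  loopless := ⟨fun a h => G.loopless.irrefl a h.1⟩

lemma colorGraph_le (G : SimpleGraph V) (c : Sym2 V → ℕ) (k : ℕ) : colorGraph G c k ≤ G :=
  fun _ _ h => h.1

lemma reach_of_mono {G : SimpleGraph V} {c : Sym2 V → ℕ} {k : ℕ} {u v : V}
    (p : G.Walk u v) (hp : ∀ e ∈ p.edges, c e = k) :
    (colorGraph G c k).Reachable u v := by
  induction p with
  | nil => exact Reachable.refl _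
  | cons h q ih =>
    exact Reachable.trans (SimpleGraph.Adj.reachable ⟨h, hp _ (by simp)⟩)
      (ih fun e he => hp e (by simp [he]))

lemma exists_parent (H : SimpleGraph V) {v z : V} (hr : H.Reachable v z) (hne : v ≠ z) :
    ∃ w, H.Adj v w ∧ H.dist w z + 1 = H.dist v z := by
  obtain ⟨p, hp⟩ := hr.exists_walk_length_eq_dist
  have hd : H.dist v z ≠ 0 := by
    simp only [ne_eq, SimpleGraph.dist_eq_zero_iff_eq_or_not_reachable]
    push_neg
    exact ⟨hne, hr⟩
  have hnil : ¬ p.Nil := by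
    rw [SimpleGraph.Walk.nil_iff_length_eq, hp]
    exact hd
  refine ⟨p.getVert 1, p.adj_snd hnil, ?_⟩
  have h1 : H.dist (p.getVert 1) z ≤ p.tail.length := SimpleGraph.dist_le p.tail
  have h1' : p.tail.length + 1 = p.length := SimpleGraph.Walk.length_tail_add_one hnil
  have hr2 : H.Reachable (p.getVert 1) z := ⟨p.tail⟩
  obtain ⟨q, hq⟩ := hr2.exists_walk_length_eq_dist
  have h2 : H.dist v z ≤ H.dist (p.getVert 1) z + 1 := by
    have := SimpleGraph.dist_le (q.cons (p.adj_snd hnil))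
    simpa [hq, Nat.add_comm] using this
  omega

lemma exists_penult {H : SimpleGraph V} {v z : V} (hr : H.Reachable v z) (hne : v ≠ z) :
    ∃ a, H.Adj a z := by
  obtain ⟨p⟩ := hr
  have hnil : ¬ p.reverse.Nil := by
    rw [SimpleGraph.Walk.nil_iff_length_eq, SimpleGraph.Walk.length_reverse]
    intro h
    exact hne (SimpleGraph.Walk.eq_of_length_eq_zero h)
  exact ⟨p.reverse.getVert 1, (p.reverse.adj_snd hnil).symm⟩

/-- removing a non-bridge edge keeps reachability -/
lemma reachable_delete_of_reachable {H : SimpleGraph V} {u v a b : V}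
    (huv : (H \ fromEdgeSet {s(u, v)}).Reachable u v) (p : H.Walk a b) :
    (H \ fromEdgeSet {s(u, v)}).Reachable a b := by
  induction p with
  | nil => exact Reachable.refl _
  | cons h q ih =>
    refine Reachable.trans ?_ ih
    rename_i c d _
    by_cases hcd : s(c, d) = s(u, v)
    · rw [Sym2.eq_iff] at hcd
      rcases hcd with ⟨rfl, rfl⟩ | ⟨rfl, rfl⟩
      · exact huv
      · exact huv.symm
    · refine SimpleGraph.Adj.reachable ?_
      rw [SimpleGraph.sdiff_adj]
      refine ⟨h, ?_⟩
      rw [SimpleGraph.fromEdgeSet_adj]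
      rintro ⟨hmem, -⟩
      exact hcd (by simpa using hmem)

lemma exists_spanning_tree_finset [Fintype V] [DecidableEq V]
    (G : SimpleGraph V) [DecidableRel G.Adj] (hG : G.Connected) :
    ∃ s : Finset (Sym2 V), ↑s ⊆ G.edgeSet ∧ (fromEdgeSet (↑s : Set (Sym2 V))).Connected ∧
      s.card + 1 = Fintype.card V := by
  classical
  let P : Finset (Sym2 V) → Prop := fun s =>
    ↑s ⊆ G.edgeSet ∧ (fromEdgeSet (↑s : Set (Sym2 V))).Connected
  let S : Finset (Finset (Sym2 V)) := G.edgeFinset.powerset.filter P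
  have hSne : S.Nonempty := by
    refine ⟨G.edgeFinset, ?_⟩
    rw [Finset.mem_filter, Finset.mem_powerset]
    refine ⟨le_rfl, ?_, ?_⟩
    · rw [coe_edgeFinset]
    · rw [coe_edgeFinset, fromEdgeSet_edgeSet]
      exact hG
  obtain ⟨s, hsS, hmin⟩ := Finset.exists_min_image S Finset.card hSne
  rw [Finset.mem_filter, Finset.mem_powerset] at hsS
  obtain ⟨hsub, hsE, hsconn⟩ := hsS
  have hacyc : (fromEdgeSet (↑s : Set (Sym2 V))).IsAcyclic := by
    by_contra hcyc
    rw [SimpleGraph.IsAcyclic] at hcyc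
    push_neg at hcyc
    obtain ⟨v, p, hp⟩ := hcyc
    obtain ⟨a, b, hadj, hmem⟩ : ∃ a b, (fromEdgeSet (↑s : Set (Sym2 V))).Adj a b ∧ s(a, b) ∈ p.edges := by
      cases p with
      | nil => exact absurd rfl hp.ne_nil
      | cons hadj q =>
        rename_i b
        exact ⟨v, b, hadj, by simp⟩
    have hnb : ¬ (fromEdgeSet (↑s : Set (Sym2 V))).IsBridge s(a, b) := by
      intro hb
      rw [SimpleGraph.isBridge_iff_adj_and_forall_cycle_notMem] at hb
      exacts [hb _ hp hmem, hadj]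
    rw [SimpleGraph.isBridge_iff] at hnb
    push_neg at hnb
    have hreach := hnb
    have hpre : (fromEdgeSet (↑s : Set (Sym2 V)) \ fromEdgeSet {s(a, b)}).Preconnected := fun p q =>
      reachable_delete_of_reachable hreach ((hsconn.preconnected p q).some)
    haveI : Nonempty V := hsconn.nonempty
    have hconn' : (fromEdgeSet (↑s : Set (Sym2 V)) \ fromEdgeSet {s(a, b)}).Connected := SimpleGraph.Connected.mk hpre
    have hes : s(a, b) ∈ s := by
      have := (fromEdgeSet_adj (↑s : Set (Sym2 V))).mp hadj
      exact_mod_cast this.1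
    have heq : fromEdgeSet (↑(s.erase s(a, b)) : Set (Sym2 V)) = fromEdgeSet (↑s : Set (Sym2 V)) \ fromEdgeSet {s(a, b)} := by
      ext p q
      simp only [fromEdgeSet_adj, sdiff_adj, Finset.coe_erase, Set.mem_diff,
        Set.mem_singleton_iff, Finset.mem_coe]
      constructor
      · rintro ⟨⟨h1, h2⟩, h3⟩
        exact ⟨⟨h1, h3⟩, fun hc => h2 hc.1⟩
      · rintro ⟨⟨h1, h3⟩, h2⟩
        exact ⟨⟨h1, fun hc => h2 ⟨hc, h3⟩⟩, h3⟩
    have hmemS : s.erase s(a, b) ∈ S := by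
      rw [Finset.mem_filter, Finset.mem_powerset]
      refine ⟨le_trans (Finset.erase_subset _ _) hsub, ?_, ?_⟩
      · exact fun e he => hsE (by exact_mod_cast Finset.mem_of_mem_erase (by exact_mod_cast he))
      · rw [heq]; exact hconn'
    have := hmin _ hmemS
    have hlt : (s.erase s(a, b)).card < s.card := Finset.card_erase_lt_of_mem hes
    omega
  -- now a tree
  have htree : (fromEdgeSet (↑s : Set (Sym2 V))).IsTree := ⟨hsconn, hacyc⟩
  haveI : Fintype ((fromEdgeSet (↑s : Set (Sym2 V))).edgeSet) := (Set.toFinite _).fintype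
  have hcard := htree.card_edgeFinset
  have hedge : (fromEdgeSet (↑s : Set (Sym2 V))).edgeFinset = s := by
    apply Finset.coe_injective
    rw [coe_edgeFinset, edgeSet_fromEdgeSet]
    ext e
    simp only [Set.mem_diff, Set.mem_setOf_eq, Finset.mem_coe, and_iff_left_iff_imp]
    intro he
    exact G.not_isDiag_of_mem_edgeSet (hsE he)
  rw [hedge] at hcard
  exact ⟨s, hsE, hsconn, hcard⟩

lemma mc_lower [Fintype V] [DecidableEq V] (G : SimpleGraph V) [DecidableRel G.Adj]
    (hG : G.Connected) (hn : 3 < Fintype.card V) :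
    ∃ c : Sym2 V → ℕ, IsMCColoring G c ∧
      (Set.image c G.edgeSet).ncard = G.edgeFinset.card + 2 - Fintype.card V := by
  classical
  obtain ⟨s, hsE, hsconn, hscard⟩ := exists_spanning_tree_finset G hG
  have hHG : fromEdgeSet (↑s : Set (Sym2 V)) ≤ G := by
    conv_rhs => rw [← fromEdgeSet_edgeSet G]
    exact fromEdgeSet_mono hsE
  set enc : Sym2 V → ℕ := fun e => (Fintype.equivFin (Sym2 V) e : ℕ) with henc
  have hencinj : Function.Injective enc := fun a b h => by
    exact (Fintype.equivFin (Sym2 V)).injective (Fin.val_injective h)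
  set c : Sym2 V → ℕ := fun e => if e ∈ s then 0 else enc e + 1 with hc
  refine ⟨c, ?_, ?_⟩
  · -- MC coloring
    intro u v
    obtain ⟨w⟩ := hsconn.preconnected u v
    refine ⟨Walk.mapLe hHG w.toPath.val, Walk.IsPath.mapLe hHG w.toPath.isPath, 0, ?_⟩
    intro e he
    have hfun : ∀ e : Sym2 V, Sym2.map (⇑(Hom.ofLE hHG)) e = e := by
      intro e
      induction e using Sym2.ind with
      | _ a b => simp [Hom.ofLE_apply]
    have hedge : (Walk.mapLe hHG (w.toPath.val)).edges = (w.toPath.val).edges := by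
      rw [Walk.mapLe, Walk.edges_map]
      exact (List.map_congr_left (fun e _ => hfun e)).trans (List.map_id _)
    rw [hedge] at he
    have h1 : e ∈ (fromEdgeSet (↑s : Set (Sym2 V))).edgeSet := Walk.edges_subset_edgeSet _ he
    rw [edgeSet_fromEdgeSet] at h1
    have : e ∈ s := by exact_mod_cast h1.1
    simp [hc, this]
  · -- color count
    have hsub : s ⊆ G.edgeFinset := fun e he => mem_edgeFinset.mpr (hsE he)
    have hns : s.Nonempty := by
      rw [← Finset.card_pos]
      omega
    have himg : Set.image c G.edgeSet = ↑(G.edgeFinset.image c) := by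
      rw [Finset.coe_image, coe_edgeFinset]
    rw [himg, Set.ncard_coe_finset]
    have hsplit : G.edgeFinset = s ∪ (G.edgeFinset \ s) := (Finset.union_sdiff_of_subset hsub).symm
    have h1 : s.image c = {0} := by
      rw [Finset.image_congr (g := fun _ => 0) (fun e he => by simp [hc, Finset.mem_coe.mp he]),
        Finset.image_const hns]
    have h2 : (G.edgeFinset \ s).image c = (G.edgeFinset \ s).image (fun e => enc e + 1) := by
      apply Finset.image_congr
      intro e he
      rw [Finset.mem_coe, Finset.mem_sdiff] at he
      simp [hc, he.2]
    have himgU : G.edgeFinset.image c = {0} ∪ (G.edgeFinset \ s).image (fun e => enc e + 1) := by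
      conv_lhs => rw [hsplit, Finset.image_union, h1, h2]
    rw [himgU]
    have hdisj : Disjoint ({0} : Finset ℕ) ((G.edgeFinset \ s).image (fun e => enc e + 1)) := by
      rw [Finset.disjoint_left]
      intro a ha hb
      rw [Finset.mem_singleton] at ha
      subst ha
      obtain ⟨e, -, he⟩ := Finset.mem_image.mp hb
      omega
    rw [Finset.card_union_of_disjoint hdisj, Finset.card_singleton,
      Finset.card_image_of_injOn (fun a _ b _ h => hencinj (by omega)),
      Finset.card_sdiff_of_subset hsub]
    have hle : s.card ≤ G.edgeFinset.card := Finset.card_le_card hsub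
    omega

lemma mc_upper [Fintype V] [DecidableEq V] (G : SimpleGraph V) [DecidableRel G.Adj]
    {x y : V} (hxy : 3 ≤ G.dist x y) (c : Sym2 V → ℕ) (hc : IsMCColoring G c) :
    (Set.image c G.edgeSet).ncard + (Fintype.card V - 2) ≤ G.edgeFinset.card := by
  classical
  have hxyne : x ≠ y := by
    intro h
    subst h
    simp [SimpleGraph.dist_self] at hxy
  have hnadj : ¬ G.Adj x y := by
    intro h
    have := SimpleGraph.dist_le (Walk.cons h Walk.nil)
    simp at this
    omega
  have hnocom : ∀ z, G.Adj x z → ¬ G.Adj z y := by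
    intro z h1 h2
    have := SimpleGraph.dist_le (Walk.cons h1 (Walk.cons h2 Walk.nil))
    simp at this
    omega
  -- charging function
  have hcharge : ∀ v : V, ∃ k : ℕ, v ≠ x → v ≠ y →
      ((G.Adj x v → (colorGraph G c k).Reachable v y) ∧
       (¬ G.Adj x v → (colorGraph G c k).Reachable v x)) := by
    intro v
    by_cases hax : G.Adj x v
    · obtain ⟨p, hp, k, hk⟩ := hc v y
      exact ⟨k, fun _ _ => ⟨fun _ => reach_of_mono p hk, fun h => absurd hax h⟩⟩
    · obtain ⟨p, hp, k, hk⟩ := hc v x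
      exact ⟨k, fun _ _ => ⟨fun h => absurd h hax, fun _ => reach_of_mono p hk⟩⟩
  choose kv hkv using hcharge
  set rt : V → V := fun v => if (colorGraph G c (kv v)).Reachable v x then x else y with hrt
  have hrtmem : ∀ v, rt v = x ∨ rt v = y := by
    intro v
    simp only [hrt]
    split_ifs <;> simp
  have hreach : ∀ v, v ≠ x → v ≠ y → (colorGraph G c (kv v)).Reachable v (rt v) := by
    intro v hvx hvy
    simp only [hrt]
    split_ifs with h
    · exact h
    · by_cases hax : G.Adj x v
      · exact (hkv v hvx hvy).1 hax
      · exact absurd ((hkv v hvx hvy).2 hax) h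
  have hparent : ∀ v : V, ∃ w : V, v ≠ x → v ≠ y →
      ((colorGraph G c (kv v)).Adj v w ∧
       (colorGraph G c (kv v)).dist w (rt v) + 1 = (colorGraph G c (kv v)).dist v (rt v)) := by
    intro v
    by_cases hvx : v = x
    · exact ⟨x, fun h => absurd hvx h⟩
    by_cases hvy : v = y
    · exact ⟨x, fun _ h => absurd hvy h⟩
    have hvrt : v ≠ rt v := by
      rcases hrtmem v with h | h <;> rw [h] <;> assumption
    obtain ⟨w, hw1, hw2⟩ := exists_parent _ (hreach v hvx hvy) hvrt
    exact ⟨w, fun _ _ => ⟨hw1, hw2⟩⟩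
  choose pv hpv using hparent
  set F : V → Sym2 V := fun v => s(v, pv v) with hF
  have hFcol : ∀ v, v ≠ x → v ≠ y → c (F v) = kv v := fun v h1 h2 => ((hpv v h1 h2).1).2
  have hFadj : ∀ v, v ≠ x → v ≠ y → G.Adj v (pv v) := fun v h1 h2 => ((hpv v h1 h2).1).1
  -- injectivity of F
  have hFinj : ∀ v w, v ≠ x → v ≠ y → w ≠ x → w ≠ y → F v = F w → v = w := by
    intro v w hvx hvy hwx hwy hFeq
    by_contra hne
    simp only [hF, Sym2.eq_iff] at hFeq
    rcases hFeq with ⟨h1, h2⟩ | ⟨h1, h2⟩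
    · exact hne h1
    -- h1 : v = pv w, h2 : pv v = w
    have hk : kv v = kv w := by
      have e1 : c s(v, pv v) = kv v := hFcol v hvx hvy
      have e2 : c s(w, pv w) = kv w := hFcol w hwx hwy
      rw [h2] at e1
      rw [← h1] at e2
      rw [Sym2.eq_swap] at e2
      rw [← e1, ← e2]
    have hadj_vw : (colorGraph G c (kv v)).Adj v w := by
      have := (hpv v hvx hvy).1
      rwa [h2] at this
    have hroot_eq : rt v = rt w := by
      have hiff : (colorGraph G c (kv v)).Reachable v x ↔
          (colorGraph G c (kv v)).Reachable w x :=
        ⟨fun h => (hadj_vw.symm.reachable).trans h, fun h => hadj_vw.reachable.trans h⟩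
      simp only [hrt, ← hk]
      by_cases hR : (colorGraph G c (kv v)).Reachable v x
      · rw [if_pos hR, if_pos (hiff.mp hR)]
      · rw [if_neg hR, if_neg (fun h => hR (hiff.mpr h))]
    have d1 := (hpv v hvx hvy).2
    rw [h2] at d1
    have d2 := (hpv w hwx hwy).2
    rw [← hk, ← h1, ← hroot_eq] at d2
    omega
  -- representative edges for each color
  set T : Finset ℕ := G.edgeFinset.image c with hT
  have hrep : ∀ k : ℕ, ∃ e : Sym2 V, k ∈ T →
      (e ∈ G.edgeFinset ∧ c e = k ∧ ∀ v, v ≠ x → v ≠ y → kv v = k → F v ≠ e) := by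
    intro k
    by_cases hkT : k ∈ T
    swap
    · exact ⟨s(x, x), fun h => absurd h hkT⟩
    by_cases hxyR : (colorGraph G c k).Reachable x y
    · obtain ⟨w, hw1, hw2⟩ := exists_parent (colorGraph G c k) hxyR.symm (Ne.symm hxyne)
      refine ⟨s(y, w), fun _ => ⟨mem_edgeFinset.mpr (G.mem_edgeSet.mpr hw1.1), hw1.2, ?_⟩⟩
      intro v hvx hvy hkvv hFe
      simp only [hF, Sym2.eq_iff] at hFe
      rcases hFe with ⟨h1, h2⟩ | ⟨h1, h2⟩
      · exact hvy h1
      -- h1 : v = w, h2 : pv v = y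
      have hrtv : rt v = x := by
        have hreachvx : (colorGraph G c k).Reachable v x := by
          rw [h1]
          exact (hw1.symm.reachable).trans hxyR.symm
        simp only [hrt]
        rw [hkvv]
        exact if_pos hreachvx
      have hd := (hpv v hvx hvy).2
      rw [hkvv, hrtv, h2, h1] at hd
      omega
    · by_cases hex : ∃ v, (v ≠ x ∧ v ≠ y) ∧ kv v = k
      · obtain ⟨v₀, ⟨h0x, h0y⟩, h0k⟩ := hex
        have hr0 : (colorGraph G c k).Reachable v₀ (rt v₀) := by
          rw [← h0k]
          exact hreach v₀ h0x h0y
        have h0rt : v₀ ≠ rt v₀ := by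
          rcases hrtmem v₀ with h | h <;> rw [h] <;> assumption
        obtain ⟨a, ha⟩ := exists_penult hr0 h0rt
        refine ⟨s(a, rt v₀), fun _ => ⟨mem_edgeFinset.mpr (G.mem_edgeSet.mpr ha.1), ha.2, ?_⟩⟩
        intro v hvx hvy hkvv hFe
        simp only [hF, Sym2.eq_iff] at hFe
        rcases hFe with ⟨h1, h2⟩ | ⟨h1, h2⟩
        · -- h1 : v = a, h2 : pv v = rt v₀
          rcases hrtmem v₀ with hz | hz
          · -- rt v₀ = x
            have hAdjvx : (colorGraph G c k).Adj v x := by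
              rw [h1, ← hz]
              exact ha
            have hry : (colorGraph G c k).Reachable v y := by
              rw [← hkvv]
              exact (hkv v hvx hvy).1 (hAdjvx.1.symm)
            exact hxyR ((hAdjvx.reachable.symm).trans hry)
          · -- rt v₀ = y
            have hAdjvy : (colorGraph G c k).Adj v y := by
              rw [h1, ← hz]
              exact ha
            have hnxv : ¬ G.Adj x v := fun h => hnocom v h hAdjvy.1
            have hrx : (colorGraph G c k).Reachable v x := by
              rw [← hkvv]
              exact (hkv v hvx hvy).2 hnxv
            exact hxyR (hrx.symm.trans hAdjvy.reachable)
        · -- h1 : v = rt v₀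
          rcases hrtmem v₀ with hz | hz
          · exact hvx (by rw [h1, hz])
          · exact hvy (by rw [h1, hz])
      · push_neg at hex
        obtain ⟨e, he, hce⟩ := Finset.mem_image.mp hkT
        exact ⟨e, fun _ => ⟨he, hce, fun v hvx hvy hkvv _ => absurd hkvv (hex v ⟨hvx, hvy⟩)⟩⟩
  choose R hR using hrep
  -- counting
  set A : Finset V := (Finset.univ.erase x).erase y with hA
  have hmemA : ∀ v ∈ A, v ≠ x ∧ v ≠ y := by
    intro v hv
    simp only [hA, Finset.mem_erase] at hv
    exact ⟨hv.2.1, hv.1⟩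
  have hcardA : A.card = Fintype.card V - 2 := by
    rw [hA, Finset.card_erase_of_mem (Finset.mem_erase.mpr ⟨Ne.symm hxyne, Finset.mem_univ y⟩),
      Finset.card_erase_of_mem (Finset.mem_univ x), Finset.card_univ]
    omega
  have hsub1 : A.image F ⊆ G.edgeFinset := by
    intro e he
    obtain ⟨v, hv, rfl⟩ := Finset.mem_image.mp he
    obtain ⟨hvx, hvy⟩ := hmemA v hv
    exact mem_edgeFinset.mpr (G.mem_edgeSet.mpr (hFadj v hvx hvy))
  have hsub2 : T.image R ⊆ G.edgeFinset := by
    intro e he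
    obtain ⟨k, hk, rfl⟩ := Finset.mem_image.mp he
    exact (hR k hk).1
  have hc1 : (A.image F).card = A.card := by
    apply Finset.card_image_of_injOn
    intro v hv w hw hvw
    obtain ⟨hvx, hvy⟩ := hmemA v (Finset.mem_coe.mp hv)
    obtain ⟨hwx, hwy⟩ := hmemA w (Finset.mem_coe.mp hw)
    exact hFinj v w hvx hvy hwx hwy hvw
  have hc2 : (T.image R).card = T.card := by
    apply Finset.card_image_of_injOn
    intro k hk l hl hkl
    have e1 : c (R k) = k := (hR k (Finset.mem_coe.mp hk)).2.1
    have e2 : c (R l) = l := (hR l (Finset.mem_coe.mp hl)).2.1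
    rw [← e1, ← e2, hkl]
  have hdisj : Disjoint (A.image F) (T.image R) := by
    rw [Finset.disjoint_left]
    intro e he1 he2
    obtain ⟨v, hv, rfl⟩ := Finset.mem_image.mp he1
    obtain ⟨k, hk, hR'⟩ := Finset.mem_image.mp he2
    obtain ⟨hvx, hvy⟩ := hmemA v hv
    have hkvv : kv v = k := by
      rw [← hFcol v hvx hvy, ← hR']
      exact (hR k hk).2.1
    exact (hR k hk).2.2 v hvx hvy hkvv hR'.symm
  have hunion : (A.image F ∪ T.image R) ⊆ G.edgeFinset := Finset.union_subset hsub1 hsub2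
  have hcards := Finset.card_le_card hunion
  rw [Finset.card_union_of_disjoint hdisj, hc1, hc2, hcardA] at hcards
  have himg : Set.image c G.edgeSet = ↑T := by
    rw [hT, Finset.coe_image, coe_edgeFinset]
  rw [himg, Set.ncard_coe_finset]
  omega

end MCAux

/-- If `G` is a connected graph with `n > 3` vertices and diameter at least 3,
then `mc(G) = m - n + 2`. -/
theorem mc_eq_of_three_le_diam {V : Type*} [Fintype V] [DecidableEq V]
    (G : SimpleGraph V) [DecidableRel G.Adj] (hG : G.Connected)
    (hn : 3 < Fintype.card V) (hd : 3 ≤ G.diam) :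
    (mcNum G : ℤ) = (G.edgeFinset.card : ℤ) - (Fintype.card V : ℤ) + 2 := by
  classical
  haveI : Nonempty V := Fintype.card_pos_iff.mp (by omega)
  obtain ⟨x, y, hxyd⟩ := SimpleGraph.exists_dist_eq_diam (G := G)
  have hxy : 3 ≤ G.dist x y := by rw [hxyd]; exact hd
  obtain ⟨c₀, hc₀, hcount⟩ := mc_lower G hG hn
  obtain ⟨s, hsE, hsconn, hscard⟩ := exists_spanning_tree_finset G hG
  have hsub : s ⊆ G.edgeFinset := fun e he => mem_edgeFinset.mpr (hsE he)
  have hnm : Fintype.card V ≤ G.edgeFinset.card + 1 := by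
    have := Finset.card_le_card hsub
    omega
  set t₀ : ℕ := G.edgeFinset.card + 2 - Fintype.card V with ht₀
  have hgt : IsGreatest
      {k | ∃ c : Sym2 V → ℕ, IsMCColoring G c ∧ (Set.image c G.edgeSet).ncard = k} t₀ := by
    constructor
    · exact ⟨c₀, hc₀, hcount⟩
    · rintro k ⟨c', hc', rfl⟩
      have := mc_upper G hxy c' hc'
      omega
  have hmc : mcNum G = t₀ := hgt.csSup_eq
  rw [hmc]
  omega
end

section
/- If G is a connected simple graph with n vertices, m edges, and minimum degree δ(G) = s, then mc(G) ≤ m − n + s + 1. -/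
open SimpleGraph Filter Real

/-- In a connected graph, every vertex other than `v` has a neighbor strictly closer to `v`. -/
lemma exists_adj_dist_lt {V : Type*} (H : SimpleGraph V) (h : H.Connected) (v u : V)
    (hu : u ≠ v) : ∃ w, H.Adj u w ∧ H.dist w v < H.dist u v := by
  have hd : H.dist u v ≠ 0 := by
    intro h0
    exact hu (h.dist_eq_zero_iff.mp h0)
  obtain ⟨p, hp⟩ := SimpleGraph.exists_walk_of_dist_ne_zero hd
  cases p with
  | nil => exact absurd (h.dist_eq_zero_iff.mpr rfl) hd
  | cons ha q =>
    refine ⟨_, ha, ?_⟩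
    have h1 : H.dist _ v ≤ q.length := SimpleGraph.dist_le q
    simp only [SimpleGraph.Walk.length_cons] at hp
    omega

/-- A connected graph on `n` vertices has at least `n - 1` edges. -/
lemma card_le_ncard_edgeSet {V : Type*} [Fintype V] [DecidableEq V] (H : SimpleGraph V)
    (h : H.Connected) : Fintype.card V ≤ H.edgeSet.ncard + 1 := by
  classical
  obtain ⟨v⟩ := h.nonempty
  choose f hf1 hf2 using fun u (hu : u ≠ v) => exists_adj_dist_lt H h v u hu
  have hfin : H.edgeSet.Finite := Set.toFinite _
  set T := hfin.toFinset with hT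
  have key : (Finset.univ.erase v).card ≤ T.card := by
    apply Finset.card_le_card_of_injOn
      (fun u => if hu : u ≠ v then s(u, f u hu) else s(u, u))
    · intro u hu
      have hu' : u ≠ v := Finset.ne_of_mem_erase hu
      simp only [hu', dif_pos, ne_eq, not_false_eq_true]
      rw [hT, Finset.mem_coe, Set.Finite.mem_toFinset]
      exact H.mem_edgeSet.mpr (hf1 u hu')
    · intro u1 h1 u2 h2 heq
      have hu1 : u1 ≠ v := Finset.ne_of_mem_erase h1
      have hu2 : u2 ≠ v := Finset.ne_of_mem_erase h2
      simp only [hu1, hu2, dif_pos, ne_eq, not_false_eq_true] at heq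
      rcases Sym2.eq_iff.mp heq with ⟨h, _⟩ | ⟨ha, hb⟩
      · exact h
      · exfalso
        have l1 := hf2 u1 hu1
        have l2 := hf2 u2 hu2
        rw [hb] at l1
        rw [← ha] at l2
        omega
  have hc : (Finset.univ.erase v).card = Fintype.card V - 1 := by
    rw [Finset.card_erase_of_mem (Finset.mem_univ v), Finset.card_univ]
  have hpos : 1 ≤ Fintype.card V := @Fintype.card_pos _ _ ⟨v⟩
  have hTcard : T.card = H.edgeSet.ncard := (Set.ncard_eq_toFinset_card _ hfin).symm
  omega

/-- In a nonnil walk, some edge contains the first vertex. -/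
lemma exists_edge_mem_head {V : Type*} {H : SimpleGraph V} {a b : V} (p : H.Walk a b)
    (hp : p.edges ≠ []) : ∃ e ∈ p.edges, a ∈ e := by
  match p with
  | SimpleGraph.Walk.nil => simp at hp
  | SimpleGraph.Walk.cons (v := x) h q =>
    exact ⟨s(a, x), by simp, Sym2.mem_mk_left _ _⟩

/-- If `G` is a connected graph with minimum degree `δ(G) = s`,
then `mc(G) ≤ m - n + s + 1`. -/
theorem mc_le_minDegree {V : Type*} [Fintype V] [DecidableEq V]
    (G : SimpleGraph V) [DecidableRel G.Adj] (hG : G.Connected)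
    (s : ℕ) (hs : G.minDegree = s) :
    (mcNum G : ℤ) ≤
      (G.edgeFinset.card : ℤ) - (Fintype.card V : ℤ) + (s : ℤ) + 1 := by
  classical
  set n := Fintype.card V with hn
  set m := G.edgeFinset.card with hm
  have hmeq : G.edgeSet.ncard = m := by
    rw [hm, SimpleGraph.edgeFinset, Set.ncard_eq_toFinset_card']
  have hnm : n ≤ m + 1 := by
    have := card_le_ncard_edgeSet G hG
    omega
  -- main bound for an arbitrary MC-coloring
  have key : ∀ k ∈ {k | ∃ c : Sym2 V → ℕ, IsMCColoring G c ∧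
      (Set.image c G.edgeSet).ncard = k}, k + n ≤ m + s + 1 := by
    rintro k ⟨c, hc, rfl⟩
    -- v : vertex of minimum degree
    have : Nonempty V := hG.nonempty
    obtain ⟨v, hv⟩ := G.exists_minimal_degree_vertex
    -- monochromatic paths to v
    choose p hpath kcol hkcol using fun u => hc u v
    set E' : Set (Sym2 V) := ⋃ u, {e | e ∈ (p u).edges} with hE'
    have hE'sub : E' ⊆ G.edgeSet := by
      rintro e he
      obtain ⟨u, hu⟩ := Set.mem_iUnion.mp he
      exact (p u).edges_subset_edgeSet hu
    -- the graph on E' is connected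
    set G' : SimpleGraph V := SimpleGraph.fromEdgeSet E' with hG'
    have hG'edge : G'.edgeSet = E' := by
      rw [hG', SimpleGraph.edgeSet_fromEdgeSet]
      ext e
      simp only [Set.mem_diff, Set.mem_setOf_eq, and_iff_left_iff_imp]
      exact fun he => G.not_isDiag_of_mem_edgeSet (hE'sub he)
    have hwalk : ∀ u, (G'.Reachable u v) := by
      intro u
      refine ⟨(p u).transfer G' ?_⟩
      intro e he
      rw [hG'edge]
      exact Set.mem_iUnion.mpr ⟨u, he⟩
    have hG'conn : G'.Connected := SimpleGraph.Connected.mk (fun a b => (hwalk a).trans (hwalk b).symm)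
    have hE'card : n ≤ E'.ncard + 1 := by
      have := card_le_ncard_edgeSet G' hG'conn
      rw [hG'edge] at this
      exact this
    -- colors on E' come from edges at v
    have hIsub : Set.image c E' ⊆ Set.image c (G.incidenceSet v) := by
      rintro _ ⟨e, he, rfl⟩
      obtain ⟨u, hu⟩ := Set.mem_iUnion.mp he
      have hne : (p u).edges ≠ [] := by
        intro h0; rw [h0] at hu; exact absurd hu List.not_mem_nil
      have hne' : (p u).reverse.edges ≠ [] := by
        rw [SimpleGraph.Walk.edges_reverse]
        simpa using hne
      obtain ⟨e', he', hve'⟩ := exists_edge_mem_head (p u).reverse hne'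
      rw [SimpleGraph.Walk.edges_reverse, List.mem_reverse] at he'
      refine ⟨e', ⟨(p u).edges_subset_edgeSet he', hve'⟩, ?_⟩
      rw [hkcol u e' he', hkcol u e hu]
    have h2 : (Set.image c E').ncard ≤ s := by
      calc (Set.image c E').ncard ≤ (Set.image c (G.incidenceSet v)).ncard :=
            Set.ncard_le_ncard hIsub (Set.toFinite _)
        _ ≤ (G.incidenceSet v).ncard := Set.ncard_image_le (Set.toFinite _)
        _ = (G.incidenceFinset v).card := by
            rw [SimpleGraph.incidenceFinset, Set.ncard_eq_toFinset_card']
        _ = G.degree v := G.card_incidenceFinset_eq_degree v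
        _ = s := by rw [← hv, hs]
    -- splitting the color count
    have hsplit : Set.image c G.edgeSet ⊆
        Set.image c E' ∪ Set.image c (G.edgeSet \ E') := by
      rintro _ ⟨e, he, rfl⟩
      by_cases h : e ∈ E'
      · exact Or.inl ⟨e, h, rfl⟩
      · exact Or.inr ⟨e, ⟨he, h⟩, rfl⟩
    have h1 : (Set.image c G.edgeSet).ncard ≤
        (Set.image c E').ncard + (Set.image c (G.edgeSet \ E')).ncard :=
      le_trans (Set.ncard_le_ncard hsplit (Set.toFinite _)) (Set.ncard_union_le _ _)
    have h3 : (Set.image c (G.edgeSet \ E')).ncard ≤ m - E'.ncard := by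
      calc (Set.image c (G.edgeSet \ E')).ncard ≤ (G.edgeSet \ E').ncard :=
            Set.ncard_image_le (Set.toFinite _)
        _ = G.edgeSet.ncard - E'.ncard := Set.ncard_diff hE'sub (Set.toFinite _)
        _ = m - E'.ncard := by rw [hmeq]
    have h4 : E'.ncard ≤ m := by
      rw [← hmeq]; exact Set.ncard_le_ncard hE'sub (Set.toFinite _)
    omega
  have hsup : mcNum G ≤ m + s + 1 - n := by
    apply csSup_le'
    intro k hk
    have := key k hk
    omega
  omega
end
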